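/- Let F = F₁ × ⋯ × F_d with each F_i ⊆ [0,1] closed containing 0 and 1, and let f : [0,1]^d → ℝ be continuous such that for every i and every fixed t_{∼i} ∈ [0,1]^{d−1}, the map u_i ↦ f(u_i, t_{∼i}) is convex. Then P_{F→[0,1]^d}(f|_F) also has all its one-dimensional cuts convex. -/

import Mathlib

open Set
open scoped Classical

/-- Closest left neighbor of `t` in `B`. -/
noncomputable def leftN (B : Set ℝ) (t : ℝ) : ℝ := sSup {u ∈ B | u ≤ t}

/-- Closest right neighbor of `t` in `B`. -/
noncomputable def rightN (B : Set ℝ) (t : ℝ) : ℝ := sInf {u ∈ B | t ≤ u}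

/-- The affine extension `L_B g` of a function `g` defined on `B` to `[0,1]`. -/
noncomputable def affExt (B : Set ℝ) (g : ℝ → ℝ) (t : ℝ) : ℝ :=
  if t ∈ B then g t
  else (1 - (t - leftN B t) / (rightN B t - leftN B t)) * g (leftN B t)
    + (t - leftN B t) / (rightN B t - leftN B t) * g (rightN B t)

/-- Neighbor `t^ε` of `t` in `Fi` (with the convention `t^- = t^+ = t` for `t ∈ Fi`). -/
noncomputable def nbr (Fi : Set ℝ) (t : ℝ) (ε : Bool) : ℝ :=
  if t ∈ Fi then t else if ε then rightN Fi t else leftN Fi t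

/-- Weight `ω_ε(t)` (with the convention `ω_-(t) = ω_+(t) = 1/2` for `t ∈ Fi`). -/
noncomputable def wt (Fi : Set ℝ) (t : ℝ) (ε : Bool) : ℝ :=
  if t ∈ Fi then 1/2
  else if ε then (t - leftN Fi t) / (rightN Fi t - leftN Fi t)
  else 1 - (t - leftN Fi t) / (rightN Fi t - leftN Fi t)

/-- The multiaffine extension `P_{F → [0,1]^d}(f)`, via its explicit formula. -/
noncomputable def multiExt {d : ℕ} (F : Fin d → Set ℝ) (f : (Fin d → ℝ) → ℝ)
    (t : Fin d → ℝ) : ℝ :=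
  ∑ ε : Fin d → Bool, (∏ j, wt (F j) (t j) (ε j)) * f (fun j => nbr (F j) (t j) (ε j))

/-- The unit cube `[0,1]^d`. -/
def cube (d : ℕ) : Set (Fin d → ℝ) := Set.pi Set.univ fun _ => Set.Icc (0:ℝ) 1

lemma leftN_mem_le {B : Set ℝ} (hc : IsClosed B) (h0 : (0:ℝ) ∈ B) {t : ℝ} (ht : 0 ≤ t) :
    leftN B t ∈ B ∧ leftN B t ≤ t := by
  have hne : ({u ∈ B | u ≤ t}).Nonempty := ⟨0, h0, ht⟩
  have hbdd : BddAbove {u ∈ B | u ≤ t} := ⟨t, fun u hu => hu.2⟩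
  have hcl : IsClosed {u ∈ B | u ≤ t} := hc.inter isClosed_Iic
  have := hcl.csSup_mem hne hbdd
  exact ⟨this.1, this.2⟩

lemma rightN_mem_ge {B : Set ℝ} (hc : IsClosed B) (h1 : (1:ℝ) ∈ B) {t : ℝ} (ht : t ≤ 1) :
    rightN B t ∈ B ∧ t ≤ rightN B t := by
  have hne : ({u ∈ B | t ≤ u}).Nonempty := ⟨1, h1, ht⟩
  have hbdd : BddBelow {u ∈ B | t ≤ u} := ⟨t, fun u hu => hu.2⟩
  have hcl : IsClosed {u ∈ B | t ≤ u} := hc.inter isClosed_Ici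
  have := hcl.csInf_mem hne hbdd
  exact ⟨this.1, this.2⟩

lemma left_lt {B : Set ℝ} (hc : IsClosed B) (h0 : (0:ℝ) ∈ B) {t : ℝ} (ht : 0 ≤ t)
    (htB : t ∉ B) : leftN B t < t := by
  obtain ⟨hm, hle⟩ := leftN_mem_le hc h0 ht
  exact lt_of_le_of_ne hle fun h => htB (h ▸ hm)

lemma lt_right {B : Set ℝ} (hc : IsClosed B) (h1 : (1:ℝ) ∈ B) {t : ℝ} (ht : t ≤ 1)
    (htB : t ∉ B) : t < rightN B t := by
  obtain ⟨hm, hle⟩ := rightN_mem_ge hc h1 ht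
  exact lt_of_le_of_ne hle fun h => htB (h ▸ hm)

lemma gap_not_mem {B : Set ℝ} {t s : ℝ}
    (hls : leftN B t < s) (hsr : s < rightN B t) : s ∉ B := by
  intro hsB
  rcases le_total s t with h | h
  · exact absurd (le_csSup ⟨t, fun u hu => hu.2⟩ (⟨hsB, h⟩ : s ∈ {u ∈ B | u ≤ t}))
      (not_le.2 hls)
  · exact absurd (csInf_le ⟨t, fun u hu => hu.2⟩ (⟨hsB, h⟩ : s ∈ {u ∈ B | t ≤ u}))
      (not_le.2 hsr)

lemma neighbors_of_gap {B : Set ℝ} (hc : IsClosed B) (h0 : (0:ℝ) ∈ B) (h1 : (1:ℝ) ∈ B)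
    {t : ℝ} (ht0 : 0 ≤ t) (ht1 : t ≤ 1) {s : ℝ}
    (hls : leftN B t < s) (hsr : s < rightN B t) :
    leftN B s = leftN B t ∧ rightN B s = rightN B t := by
  obtain ⟨hlB, _⟩ := leftN_mem_le hc h0 ht0
  obtain ⟨hrB, _⟩ := rightN_mem_ge hc h1 ht1
  constructor
  · apply le_antisymm
    · refine csSup_le ⟨leftN B t, ⟨hlB, hls.le⟩⟩ ?_
      intro u hu
      by_contra hlt'
      push_neg at hlt'
      exact gap_not_mem hlt' (lt_of_le_of_lt hu.2 hsr) hu.1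
    · exact le_csSup ⟨s, fun u hu => hu.2⟩ ⟨hlB, hls.le⟩
  · apply le_antisymm
    · exact csInf_le ⟨s, fun u hu => hu.2⟩ ⟨hrB, hsr.le⟩
    · refine le_csInf ⟨rightN B t, ⟨hrB, hsr.le⟩⟩ ?_
      intro u hu
      by_contra hlt'
      push_neg at hlt'
      exact gap_not_mem (lt_of_lt_of_le hls hu.2) hlt' hu.1


lemma affExt_gap_eq {B : Set ℝ} (hc : IsClosed B) (h0 : (0:ℝ) ∈ B) (h1 : (1:ℝ) ∈ B)
    {t : ℝ} (ht0 : 0 ≤ t) (ht1 : t ≤ 1) (htB : t ∉ B) (g : ℝ → ℝ) {s : ℝ}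
    (hs1 : leftN B t ≤ s) (hs2 : s ≤ rightN B t) :
    affExt B g s = g (leftN B t)
      + (s - leftN B t) * ((g (rightN B t) - g (leftN B t)) / (rightN B t - leftN B t)) := by
  obtain ⟨hlB, _⟩ := leftN_mem_le hc h0 ht0
  obtain ⟨hrB, _⟩ := rightN_mem_ge hc h1 ht1
  have hlt : leftN B t < t := left_lt hc h0 ht0 htB
  have htr : t < rightN B t := lt_right hc h1 ht1 htB
  have hlr : leftN B t < rightN B t := hlt.trans htr
  have hne : rightN B t - leftN B t ≠ 0 := sub_ne_zero.2 hlr.ne'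
  rcases eq_or_lt_of_le hs1 with h | h
  · rw [← h, affExt, if_pos hlB]
    simp
  rcases eq_or_lt_of_le hs2 with h2 | h2
  · rw [h2, affExt, if_pos hrB]
    field_simp
    ring
  · have hsB : s ∉ B := gap_not_mem h h2
    have hLR := neighbors_of_gap hc h0 h1 ht0 ht1 h h2
    rw [affExt, if_neg hsB, hLR.1, hLR.2]
    field_simp
    ring

lemma affExt_ge {B : Set ℝ} (hB : B ⊆ Icc (0:ℝ) 1) (hc : IsClosed B)
    (h0 : (0:ℝ) ∈ B) (h1 : (1:ℝ) ∈ B) {g : ℝ → ℝ}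
    (hg : ConvexOn ℝ (Icc (0:ℝ) 1) g) {s : ℝ} (hs : s ∈ Icc (0:ℝ) 1) :
    g s ≤ affExt B g s := by
  by_cases hsB : s ∈ B
  · rw [affExt, if_pos hsB]
  · obtain ⟨hlB, _⟩ := leftN_mem_le hc h0 hs.1
    obtain ⟨hrB, _⟩ := rightN_mem_ge hc h1 hs.2
    have hlt : leftN B s < s := left_lt hc h0 hs.1 hsB
    have htr : s < rightN B s := lt_right hc h1 hs.2 hsB
    have hpos : (0:ℝ) < rightN B s - leftN B s := by linarith
    set lam := (s - leftN B s) / (rightN B s - leftN B s) with hlam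
    have hlam0 : 0 ≤ lam := div_nonneg (by linarith) hpos.le
    have hlam1 : lam ≤ 1 := by
      rw [hlam, div_le_one hpos]; linarith
    have hcomb : (1 - lam) • leftN B s + lam • rightN B s = s := by
      simp only [smul_eq_mul, hlam]
      field_simp
      ring
    have := hg.2 (hB hlB) (hB hrB) (by linarith : (0:ℝ) ≤ 1 - lam) hlam0 (by ring)
    rw [hcomb] at this
    rw [affExt, if_neg hsB]
    simpa [smul_eq_mul] using this

lemma affine_nonneg {p q l r z : ℝ} (hl : l ≤ z) (hr : z ≤ r)
    (h1 : 0 ≤ p * l + q) (h2 : 0 ≤ p * r + q) : 0 ≤ p * z + q := by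
  rcases le_total 0 p with hp | hp
  · have := mul_le_mul_of_nonneg_left hl hp
    linarith
  · have := mul_le_mul_of_nonpos_left hr hp
    linarith


lemma chord_bound {B : Set ℝ} (hB : B ⊆ Icc (0:ℝ) 1) (hc : IsClosed B)
    (h0 : (0:ℝ) ∈ B) (h1 : (1:ℝ) ∈ B) {g : ℝ → ℝ}
    (hg : ConvexOn ℝ (Icc (0:ℝ) 1) g)
    {x y w : ℝ} (hx : x ∈ Icc (0:ℝ) 1) (hy : y ∈ Icc (0:ℝ) 1) (hxy : x < y)
    (hxw : x ≤ w) (hwy : w ≤ y) :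
    g w ≤ affExt B g x + (w - x) * ((affExt B g y - affExt B g x) / (y - x)) := by
  have hyx : (0:ℝ) < y - x := by linarith
  set c := (y - w) / (y - x) with hcdef
  set e := (w - x) / (y - x) with hedef
  have hc0 : 0 ≤ c := div_nonneg (by linarith) hyx.le
  have he0 : 0 ≤ e := div_nonneg (by linarith) hyx.le
  have hce : c + e = 1 := by
    rw [hcdef, hedef, ← add_div, div_eq_one_iff_eq hyx.ne']
    ring
  have hw' : c • x + e • y = w := by
    simp only [smul_eq_mul, hcdef, hedef]
    field_simp
    ring
  have hgw : g w ≤ c * g x + e * g y := by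
    have := hg.2 hx hy hc0 he0 hce
    rw [hw'] at this
    simpa [smul_eq_mul] using this
  have hgx : g x ≤ affExt B g x := affExt_ge hB hc h0 h1 hg hx
  have hgy : g y ≤ affExt B g y := affExt_ge hB hc h0 h1 hg hy
  have h1' : c * g x ≤ c * affExt B g x := mul_le_mul_of_nonneg_left hgx hc0
  have h2' : e * g y ≤ e * affExt B g y := mul_le_mul_of_nonneg_left hgy he0
  have heq : c * affExt B g x + e * affExt B g y
      = affExt B g x + (w - x) * ((affExt B g y - affExt B g x) / (y - x)) := by
    rw [hcdef, hedef]
    field_simp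
    ring
  linarith

lemma affExt_convexOn {B : Set ℝ} (hB : B ⊆ Icc (0:ℝ) 1) (hc : IsClosed B)
    (h0 : (0:ℝ) ∈ B) (h1 : (1:ℝ) ∈ B) {g : ℝ → ℝ}
    (hg : ConvexOn ℝ (Icc (0:ℝ) 1) g) : ConvexOn ℝ (Icc (0:ℝ) 1) (affExt B g) := by
  have key : ∀ x ∈ Icc (0:ℝ) 1, ∀ y ∈ Icc (0:ℝ) 1, ∀ a b : ℝ, 0 ≤ a → 0 ≤ b →
      a + b = 1 → x < y →
      affExt B g (a * x + b * y) ≤ a * affExt B g x + b * affExt B g y := by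
    intro x hx y hy a b ha hb hab hxy
    rcases eq_or_lt_of_le ha with ha0 | ha0
    · have hb1 : b = 1 := by linarith
      rw [← ha0, hb1]; simp
    rcases eq_or_lt_of_le hb with hb0 | hb0
    · have ha1 : a = 1 := by linarith
      rw [← hb0, ha1]; simp
    set z := a * x + b * y with hzdef
    have hzx : z - x = b * (y - x) := by
      rw [hzdef]; linear_combination x * hab
    have hyz : y - z = a * (y - x) := by
      rw [hzdef]; linear_combination (-y) * hab
    have hxz : x < z := by
      have := mul_pos hb0 (sub_pos.2 hxy); linarith
    have hzy : z < y := by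
      have := mul_pos ha0 (sub_pos.2 hxy); linarith
    have hz : z ∈ Icc (0:ℝ) 1 := ⟨by nlinarith [hx.1, hy.1], by nlinarith [hx.2, hy.2]⟩
    by_cases hzB : z ∈ B
    · rw [affExt, if_pos hzB]
      have hgz : g z ≤ a * g x + b * g y := by
        have := hg.2 hx hy ha hb hab
        simpa [smul_eq_mul] using this
      have hgx := affExt_ge hB hc h0 h1 hg hx
      have hgy := affExt_ge hB hc h0 h1 hg hy
      nlinarith
    · set l := leftN B z with hldef
      set r := rightN B z with hrdef
      obtain ⟨hlB, _⟩ := leftN_mem_le hc h0 hz.1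
      obtain ⟨hrB, _⟩ := rightN_mem_ge hc h1 hz.2
      have hlz : l < z := left_lt hc h0 hz.1 hzB
      have hzr : z < r := lt_right hc h1 hz.2 hzB
      have hl01 : l ∈ Icc (0:ℝ) 1 := hB hlB
      have hr01 : r ∈ Icc (0:ℝ) 1 := hB hrB
      have hlr : l < r := hlz.trans hzr
      have hrlne : r - l ≠ 0 := sub_ne_zero.2 hlr.ne'
      have hyxne : y - x ≠ 0 := sub_ne_zero.2 hxy.ne'
      set X := affExt B g x with hXdef
      set Y := affExt B g y with hYdef
      set sL := (Y - X) / (y - x) with hsLdef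
      set sC := (g r - g l) / (r - l) with hsCdef
      -- the chord formula on the gap of z
      have hchord : ∀ s, l ≤ s → s ≤ r → affExt B g s = g l + (s - l) * sC :=
        fun s hs1 hs2 => affExt_gap_eq hc h0 h1 hz.1 hz.2 hzB g hs1 hs2
      -- value of the target chord at z
      have hLz : a * X + b * Y = X + (z - x) * sL := by
        have key2 : (z - x) * sL = b * (Y - X) := by
          rw [hzx, hsLdef]
          field_simp
        rw [key2]; linear_combination X * hab
      -- endpoints
      set l' := max l x with hl'def
      set r' := min r y with hr'def
      have hl'z : l' ≤ z := max_le hlz.le hxz.le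
      have hzr' : z ≤ r' := le_min hzr.le hzy.le
      have expand : ∀ s : ℝ, (sL - sC) * s + ((X - x * sL) - (g l - l * sC))
          = (X + (s - x) * sL) - (g l + (s - l) * sC) := fun s => by ring
      have claim1 : g l + (l' - l) * sC ≤ X + (l' - x) * sL := by
        rcases le_total x l with hxl | hlx
        · have hl'eq : l' = l := max_eq_left hxl
          rw [hl'eq]
          have := chord_bound hB hc h0 h1 hg hx hy hxy hxl (by linarith)
          simpa using this
        · have hl'eq : l' = x := max_eq_right hlx
          rw [hl'eq]
          have hXC : X = g l + (x - l) * sC := hchord x hlx (by linarith)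
          rw [hXC]; simp
      have claim2 : g l + (r' - l) * sC ≤ X + (r' - x) * sL := by
        rcases le_total y r with hyr | hry
        · have hr'eq : r' = y := min_eq_right hyr
          rw [hr'eq]
          have hYC : Y = g l + (y - l) * sC := hchord y (by linarith) hyr
          have hLy : (y - x) * sL = Y - X := by
            rw [hsLdef]; field_simp
          linarith [hYC, hLy]
        · have hr'eq : r' = r := min_eq_left hry
          rw [hr'eq]
          have hCr : g l + (r - l) * sC = g r := by
            rw [hsCdef]; field_simp
            ring
          rw [hCr]
          exact chord_bound hB hc h0 h1 hg hx hy hxy (by linarith) hry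
      have hA : 0 ≤ (sL - sC) * l' + ((X - x * sL) - (g l - l * sC)) := by
        rw [expand l']; linarith
      have hBnd : 0 ≤ (sL - sC) * r' + ((X - x * sL) - (g l - l * sC)) := by
        rw [expand r']; linarith
      have hZ := affine_nonneg hl'z hzr' hA hBnd
      rw [expand z] at hZ
      have hCz : affExt B g z = g l + (z - l) * sC := hchord z hlz.le hzr.le
      rw [hCz, hLz]
      linarith
  refine ⟨convex_Icc 0 1, ?_⟩
  intro x hx y hy a b ha hb hab
  simp only [smul_eq_mul]
  rcases lt_trichotomy x y with h | h | h
  · exact key x hx y hy a b ha hb hab h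
  · subst h
    have : a * x + b * x = x := by linear_combination x * hab
    rw [this]
    have hA : a * affExt B g x + b * affExt B g x = affExt B g x := by
      linear_combination (affExt B g x) * hab
    linarith
  · have := key y hy x hx b a hb ha (by linarith) h
    calc affExt B g (a * x + b * y) = affExt B g (b * y + a * x) := by ring_nf
      _ ≤ b * affExt B g y + a * affExt B g x := this
      _ = a * affExt B g x + b * affExt B g y := by ring


lemma wt_nonneg {B : Set ℝ} (hc : IsClosed B) (h0 : (0:ℝ) ∈ B) (h1 : (1:ℝ) ∈ B)
    {t : ℝ} (ht : t ∈ Icc (0:ℝ) 1) (ε : Bool) : 0 ≤ wt B t ε := by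
  rw [wt]
  by_cases htB : t ∈ B
  · simp [htB]
  · simp only [if_neg htB]
    have hlt := left_lt hc h0 ht.1 htB
    have htr := lt_right hc h1 ht.2 htB
    have hpos : (0:ℝ) < rightN B t - leftN B t := by linarith
    cases ε
    · simp only [Bool.false_eq_true, if_false]
      have : (t - leftN B t) / (rightN B t - leftN B t) ≤ 1 := by
        rw [div_le_one hpos]; linarith
      linarith
    · simp only [if_true]
      exact div_nonneg (by linarith) hpos.le

lemma nbr_mem {B : Set ℝ} (hB : B ⊆ Icc (0:ℝ) 1) (hc : IsClosed B)
    (h0 : (0:ℝ) ∈ B) (h1 : (1:ℝ) ∈ B) {t : ℝ} (ht : t ∈ Icc (0:ℝ) 1) (ε : Bool) :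
    nbr B t ε ∈ Icc (0:ℝ) 1 := by
  rw [nbr]
  by_cases htB : t ∈ B
  · simpa [htB] using ht
  · simp only [if_neg htB]
    cases ε
    · simp only [Bool.false_eq_true, if_false]
      exact hB (leftN_mem_le hc h0 ht.1).1
    · simp only [if_true]
      exact hB (rightN_mem_ge hc h1 ht.2).1

lemma pair_affExt (B : Set ℝ) (g : ℝ → ℝ) (u : ℝ) :
    wt B u false * g (nbr B u false) + wt B u true * g (nbr B u true) = affExt B g u := by
  by_cases huB : u ∈ B
  · simp only [wt, nbr, affExt, if_pos huB]
    ring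
  · simp only [wt, nbr, affExt, if_neg huB, Bool.false_eq_true, if_false, if_true]

lemma convexOn_sum' {ι : Type*} (s : Finset ι) (φ : ι → ℝ → ℝ)
    (h : ∀ i ∈ s, ConvexOn ℝ (Icc (0:ℝ) 1) (φ i)) :
    ConvexOn ℝ (Icc (0:ℝ) 1) (fun u => ∑ i ∈ s, φ i u) := by
  classical
  induction s using Finset.induction_on with
  | empty => simpa using convexOn_const (0:ℝ) (convex_Icc 0 1)
  | @insert a s hx ih =>
      simp only [Finset.sum_insert hx]
      exact (h _ (Finset.mem_insert_self _ _)).add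
        (ih fun i hi => h i (Finset.mem_insert_of_mem hi))


/-- if all one-dimensional cuts of a continuous `f` are convex, then so are
all one-dimensional cuts of the multiaffine extension of its restriction to `F`. -/
theorem stmt15 (d : ℕ) (hd : 1 ≤ d) (F : Fin d → Set ℝ)
    (hFsub : ∀ i, F i ⊆ Set.Icc (0:ℝ) 1) (hFc : ∀ i, IsClosed (F i))
    (h0 : ∀ i, (0:ℝ) ∈ F i) (h1 : ∀ i, (1:ℝ) ∈ F i)
    (f : (Fin d → ℝ) → ℝ) (hf : ContinuousOn f (cube d))
    (hconv : ∀ i : Fin d, ∀ t ∈ cube d,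
      ConvexOn ℝ (Set.Icc (0:ℝ) 1) (fun u => f (Function.update t i u))) :
    ∀ i : Fin d, ∀ t ∈ cube d,
      ConvexOn ℝ (Set.Icc (0:ℝ) 1) (fun u => multiExt F f (Function.update t i u)) := by
  intro i t ht
  classical
  have htj : ∀ j, t j ∈ Icc (0:ℝ) 1 := fun j => ht j (Set.mem_univ j)
  set e := Equiv.piSplitAt i (fun _ : Fin d => Bool) with hedef
  set T : ({j : Fin d // j ≠ i} → Bool) → (Fin d → ℝ) :=
    fun η j => if h : j = i then t i else nbr (F j) (t j) (η ⟨j, h⟩) with hTdef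
  set W : ({j : Fin d // j ≠ i} → Bool) → ℝ :=
    fun η => ∏ j : {j : Fin d // j ≠ i}, wt (F (j : Fin d)) (t (j : Fin d)) (η j) with hWdef
  have hTcube : ∀ η, T η ∈ cube d := by
    intro η j _
    by_cases h : j = i
    · simp only [hTdef, dif_pos h]
      subst h; exact htj j
    · simp only [hTdef, dif_neg h]
      exact nbr_mem (hFsub j) (hFc j) (h0 j) (h1 j) (htj j) _
  have hdecomp : ∀ u : ℝ, multiExt F f (Function.update t i u)
      = ∑ η : {j : Fin d // j ≠ i} → Bool,
          W η * affExt (F i) (fun v => f (Function.update (T η) i v)) u := by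
    intro u
    rw [multiExt]
    rw [← Equiv.sum_comp e.symm
      (fun ε : Fin d → Bool => (∏ j, wt (F j) (Function.update t i u j) (ε j)) *
        f (fun j => nbr (F j) (Function.update t i u j) (ε j)))]
    rw [Fintype.sum_prod_type]
    rw [Finset.sum_comm]
    refine Finset.sum_congr rfl ?_
    intro η _
    have hei : ∀ b : Bool, e.symm (b, η) i = b := by intro b; simp [hedef]
    have hej : ∀ (b : Bool) (j : Fin d) (h : j ≠ i), e.symm (b, η) j = η ⟨j, h⟩ := by
      intro b j h; simp [hedef, h]
    have hterm : ∀ b : Bool,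
        (∏ j, wt (F j) (Function.update t i u j) (e.symm (b, η) j)) *
          f (fun j => nbr (F j) (Function.update t i u j) (e.symm (b, η) j))
        = W η * (wt (F i) u b * f (Function.update (T η) i (nbr (F i) u b))) := by
      intro b
      have hprod : (∏ j, wt (F j) (Function.update t i u j) (e.symm (b, η) j))
          = wt (F i) u b * W η := by
        rw [← Finset.mul_prod_erase Finset.univ _ (Finset.mem_univ i)]
        congr 1
        · rw [Function.update_self, hei b]
        · rw [Finset.prod_subtype (p := fun j => j ≠ i) (Finset.univ.erase i)
            (fun j => by simp)
            (fun j => wt (F j) (Function.update t i u j) (e.symm (b, η) j))]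
          refine Finset.prod_congr rfl ?_
          intro j _
          rw [Function.update_of_ne j.2, hej b j j.2]
      have harg : (fun j => nbr (F j) (Function.update t i u j) (e.symm (b, η) j))
          = Function.update (T η) i (nbr (F i) u b) := by
        funext j
        by_cases h : j = i
        · subst h
          rw [Function.update_self, Function.update_self, hei b]
        · rw [Function.update_of_ne h, Function.update_of_ne h, hej b j h]
          simp only [hTdef, dif_neg h]
      rw [hprod, harg]
      ring
    calc (∑ b : Bool, (∏ j, wt (F j) (Function.update t i u j) (e.symm (b, η) j)) *
            f (fun j => nbr (F j) (Function.update t i u j) (e.symm (b, η) j)))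
        = ∑ b : Bool, W η * (wt (F i) u b * f (Function.update (T η) i (nbr (F i) u b))) :=
          Finset.sum_congr rfl (fun b _ => hterm b)
      _ = W η * affExt (F i) (fun v => f (Function.update (T η) i v)) u := by
          rw [Fintype.sum_bool]
          have hpa := pair_affExt (F i) (fun v => f (Function.update (T η) i v)) u
          rw [← hpa]
          ring
  have hfun : (fun u => multiExt F f (Function.update t i u))
      = fun u => ∑ η : {j : Fin d // j ≠ i} → Bool,
          W η * affExt (F i) (fun v => f (Function.update (T η) i v)) u := funext hdecomp
  rw [hfun]
  apply convexOn_sum'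
  intro η _
  have hg : ConvexOn ℝ (Icc (0:ℝ) 1) (fun v => f (Function.update (T η) i v)) :=
    hconv i (T η) (hTcube η)
  have haff := affExt_convexOn (hFsub i) (hFc i) (h0 i) (h1 i) hg
  have hW : 0 ≤ W η := Finset.prod_nonneg fun j _ =>
    wt_nonneg (hFc (j : Fin d)) (h0 (j : Fin d)) (h1 (j : Fin d)) (htj (j : Fin d)) (η j)
  exact haff.smul hW
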